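/- Let ‖·‖ be a norm on (ℝ^n)^m, let M : (ℝ^n)^m → (ℝ^n)^m be quasi-nonexpansive with respect to ‖·‖, and for each t ≥ 1 let S(t) be an m × m stochastic matrix such that the map S(t) ⊗ I is quasi-nonexpansive with respect to ‖·‖. Define x(t+1) = M((S(t) ⊗ I) x(t)) for t ≥ 1 from an initial x(1), and set x̄(t) = (S(t) ⊗ I) x(t). If some subsequence of (x̄(t)) converges to a point x* ∈ F(M) ∩ C, then x(t) converges to x* as t → ∞. -/

import Mathlib

open Filter Topology Finset
open scoped ENNReal

def IsNormOn {E : Type*} [AddCommGroup E] [Module ℝ E] (N : E → ℝ) : Prop :=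
  (∀ x, N x = 0 ↔ x = 0) ∧
  (∀ (c : ℝ) (x : E), N (c • x) = |c| * N x) ∧
  (∀ x y : E, N (x + y) ≤ N x + N y)

def IsParacontraction {E : Type*} [AddCommGroup E] [Module ℝ E] [TopologicalSpace E]
    (N : E → ℝ) (P : E → E) : Prop :=
  Continuous P ∧ ∀ x y : E, P x ≠ x → P y = y → N (P x - y) < N (x - y)

def QuasiNonexpansive {E : Type*} [AddCommGroup E] (N : E → ℝ) (P : E → E) : Prop :=
  ∀ x y : E, P y = y → N (P x - y) ≤ N (x - y)

noncomputable def pnorm {n : ℕ} (p : ℝ) (x : Fin n → ℝ) : ℝ :=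
  (∑ i, |x i| ^ p) ^ (1 / p)

noncomputable def pnormE {n : ℕ} (p : ℝ≥0∞) (x : Fin n → ℝ) : ℝ :=
  if p = ⊤ then ⨆ i, |x i| else (∑ i, |x i| ^ p.toReal) ^ (1 / p.toReal)

noncomputable def mixed22 {m n : ℕ} (x : Fin m → Fin n → ℝ) : ℝ :=
  pnorm 2 (fun i => pnorm 2 (x i))

noncomputable def mixedPInf {m n : ℕ} (p : ℝ) (x : Fin m → Fin n → ℝ) : ℝ :=
  ⨆ i, pnorm p (x i)

noncomputable def mixedEInf {m n : ℕ} (p : ℝ≥0∞) (x : Fin m → Fin n → ℝ) : ℝ :=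
  ⨆ i, pnormE p (x i)

def IsStochastic {m : ℕ} (S : Matrix (Fin m) (Fin m) ℝ) : Prop :=
  (∀ i j, 0 ≤ S i j) ∧ ∀ i, ∑ j, S i j = 1

def IsDoublyStochastic {m : ℕ} (S : Matrix (Fin m) (Fin m) ℝ) : Prop :=
  IsStochastic S ∧ ∀ j, ∑ i, S i j = 1

def kron {m n : ℕ} (S : Matrix (Fin m) (Fin m) ℝ) (x : Fin m → Fin n → ℝ) :
    Fin m → Fin n → ℝ :=
  fun i => ∑ j, S i j • x j

def stackMap {m n : ℕ} (M : Fin m → (Fin n → ℝ) → (Fin n → ℝ)) :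
    (Fin m → Fin n → ℝ) → (Fin m → Fin n → ℝ) :=
  fun x i => M i (x i)

def consensusSet (m n : ℕ) : Set (Fin m → Fin n → ℝ) :=
  {x | ∀ i j : Fin m, x i = x j}

def StronglyConnected {V : Type*} (G : V → V → Prop) : Prop :=
  ∀ i j : V, Relation.ReflTransGen G i j

def graphComp {V : Type*} (Gq Gp : V → V → Prop) : V → V → Prop :=
  fun i j => ∃ k, Gp i k ∧ Gq k j

def composeChain {m : ℕ} (G : ℕ → Fin m → Fin m → Prop) (a : ℕ) :
    ℕ → (Fin m → Fin m → Prop)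
  | 0 => G a
  | k + 1 => graphComp (G (a + (k + 1))) (composeChain G a k)

def mapChain {α : Type*} (F : ℕ → α → α) : ℕ → α → α
  | 0 => id
  | k + 1 => F (k + 1) ∘ mapChain F k

noncomputable def Phi {m : ℕ} (S : ℕ → Matrix (Fin m) (Fin m) ℝ) (τ t : ℕ) :
    Matrix (Fin m) (Fin m) ℝ :=
  (List.range (t - τ)).foldl (fun A k => S (τ + k + 1) * A) 1

noncomputable def normOnSeminorm {E : Type*} [AddCommGroup E] [Module ℝ E]
    (N : E → ℝ) (hN : IsNormOn N) : Seminorm ℝ E :=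
  Seminorm.of N hN.2.2 (fun a x => by rw [hN.2.1, Real.norm_eq_abs])

lemma normOn_nonneg {E : Type*} [AddCommGroup E] [Module ℝ E]
    (N : E → ℝ) (hN : IsNormOn N) (x : E) : 0 ≤ N x :=
  apply_nonneg (normOnSeminorm N hN) x

lemma normOn_upper {n m : ℕ} (N : (Fin m → Fin n → ℝ) → ℝ) (hN : IsNormOn N) :
    ∃ C : ℝ, 0 ≤ C ∧ ∀ x, N x ≤ C * ‖x‖ := by
  set p := normOnSeminorm N hN with hp
  set e : Fin m → Fin n → (Fin m → Fin n → ℝ) :=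
    fun i j => Pi.single i (Pi.single j (1:ℝ)) with he
  refine ⟨∑ i, ∑ j, p (e i j), by positivity, fun x => ?_⟩
  have hx : x = ∑ i, ∑ j, x i j • e i j := by
    funext a b
    simp [he, Finset.sum_apply, Pi.single_apply, apply_ite (fun f : Fin n → ℝ => f b),
      mul_ite, Finset.sum_ite_eq]
  have h1 : N x = p x := rfl
  rw [h1]
  have step1 : p x ≤ ∑ i, p (∑ j, x i j • e i j) := by
    conv_lhs => rw [hx]
    exact Finset.le_sum_of_subadditive p (map_zero p).le (map_add_le_add p) _ _
  calc p x ≤ ∑ i, p (∑ j, x i j • e i j) := step1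
    _ ≤ ∑ i, ∑ j, p (x i j • e i j) := by
        exact Finset.sum_le_sum fun i _ => Finset.le_sum_of_subadditive p (map_zero p).le (map_add_le_add p) _ _
    _ = ∑ i, ∑ j, |x i j| * p (e i j) := by
        refine Finset.sum_congr rfl fun i _ => Finset.sum_congr rfl fun j _ => ?_
        rw [show p (x i j • e i j) = ‖x i j‖ * p (e i j) from map_smul_eq_mul p _ _,
          Real.norm_eq_abs]
    _ ≤ ∑ i, ∑ j, ‖x‖ * p (e i j) := by
        refine Finset.sum_le_sum fun i _ => Finset.sum_le_sum fun j _ => ?_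
        have h2 : |x i j| ≤ ‖x‖ := by
          calc |x i j| = ‖x i j‖ := (Real.norm_eq_abs _).symm
            _ ≤ ‖x i‖ := norm_le_pi_norm (x i) j
            _ ≤ ‖x‖ := norm_le_pi_norm x i
        exact mul_le_mul_of_nonneg_right h2 (apply_nonneg p _)
    _ = (∑ i, ∑ j, p (e i j)) * ‖x‖ := by
        rw [Finset.sum_mul]
        refine Finset.sum_congr rfl fun i _ => ?_
        rw [Finset.sum_mul]
        exact Finset.sum_congr rfl fun j _ => mul_comm _ _

lemma normOn_continuous {n m : ℕ} (N : (Fin m → Fin n → ℝ) → ℝ) (hN : IsNormOn N) :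
    Continuous N := by
  obtain ⟨C, hC0, hC⟩ := normOn_upper N hN
  set p := normOnSeminorm N hN with hp
  have hlip : LipschitzWith (Real.toNNReal C) N := by
    apply LipschitzWith.of_dist_le_mul
    intro a b
    have h1 : ∀ u v : Fin m → Fin n → ℝ, N u - N v ≤ N (u - v) := by
      intro u v
      have := hN.2.2 (u - v) v
      simpa using this
    have h2 : |N a - N b| ≤ N (a - b) := by
      rw [abs_sub_le_iff]
      refine ⟨h1 a b, ?_⟩
      have := h1 b a
      have h3 : N (b - a) = N (a - b) := by
        have : b - a = (-1 : ℝ) • (a - b) := by ring_nf; module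
        rw [this, hN.2.1]; simp
      linarith
    calc dist (N a) (N b) = |N a - N b| := Real.dist_eq _ _
      _ ≤ N (a - b) := h2
      _ ≤ C * ‖a - b‖ := hC _
      _ = Real.toNNReal C * dist a b := by
          rw [dist_eq_norm, Real.coe_toNNReal C hC0]
  exact hlip.continuous

lemma normOn_lower {n m : ℕ} (N : (Fin m → Fin n → ℝ) → ℝ) (hN : IsNormOn N) :
    ∃ c : ℝ, 0 < c ∧ ∀ x, c * ‖x‖ ≤ N x := by
  by_cases htriv : ∀ x : Fin m → Fin n → ℝ, x = 0
  · refine ⟨1, one_pos, fun x => ?_⟩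
    rw [htriv x]; simp [normOn_nonneg N hN]
  · push_neg at htriv
    obtain ⟨y, hy⟩ := htriv
    have hsne : (Metric.sphere (0 : Fin m → Fin n → ℝ) 1).Nonempty := by
      refine ⟨‖y‖⁻¹ • y, ?_⟩
      simp [norm_smul, norm_ne_zero_iff.mpr hy,
        inv_mul_cancel₀ (norm_ne_zero_iff.mpr hy)]
    obtain ⟨x₀, hx₀s, hx₀min⟩ :=
      (isCompact_sphere (0 : Fin m → Fin n → ℝ) 1).exists_isMinOn hsne
        ((normOn_continuous N hN).continuousOn)
    have hx₀norm : ‖x₀‖ = 1 := by simpa using hx₀s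
    have hx₀pos : 0 < N x₀ := by
      rcases (normOn_nonneg N hN x₀).lt_or_eq with h | h
      · exact h
      · exfalso
        have : x₀ = 0 := (hN.1 x₀).mp h.symm
        rw [this] at hx₀norm; simp at hx₀norm
    refine ⟨N x₀, hx₀pos, fun x => ?_⟩
    by_cases hx : x = 0
    · simp [hx, (hN.1 0).mpr rfl]
    · have hxn : ‖x‖ ≠ 0 := norm_ne_zero_iff.mpr hx
      have hmem : ‖x‖⁻¹ • x ∈ Metric.sphere (0 : Fin m → Fin n → ℝ) 1 := by
        simp [norm_smul, inv_mul_cancel₀ hxn]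
      have h1 : N x₀ ≤ N (‖x‖⁻¹ • x) := hx₀min hmem
      have h2 : N (‖x‖⁻¹ • x) = ‖x‖⁻¹ * N x := by
        rw [hN.2.1]; congr 1
        rw [abs_of_nonneg (by positivity)]
      rw [h2] at h1
      have hpos : (0:ℝ) < ‖x‖ := lt_of_le_of_ne (norm_nonneg x) (Ne.symm hxn)
      calc N x₀ * ‖x‖ ≤ (‖x‖⁻¹ * N x) * ‖x‖ := by nlinarith
        _ = N x := by field_simp

theorem stmt15 {n m : ℕ} (N : (Fin m → Fin n → ℝ) → ℝ) (hN : IsNormOn N)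
    (M : (Fin m → Fin n → ℝ) → (Fin m → Fin n → ℝ))
    (hM : QuasiNonexpansive N M)
    (S : ℕ → Matrix (Fin m) (Fin m) ℝ) (hS : ∀ t, IsStochastic (S t))
    (hSq : ∀ t, QuasiNonexpansive N (kron (n := n) (S t)))
    (x : ℕ → Fin m → Fin n → ℝ)
    (hx : ∀ t, 1 ≤ t → x (t + 1) = M (kron (S t) (x t)))
    (xstar : Fin m → Fin n → ℝ) (hfix : M xstar = xstar)
    (hcons : xstar ∈ consensusSet m n)
    (φ : ℕ → ℕ) (hφ : StrictMono φ)
    (hconv : Tendsto (fun k => kron (S (φ k)) (x (φ k))) atTop (𝓝 xstar)) :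
    Tendsto x atTop (𝓝 xstar) := by
  -- xstar is fixed by each kron (S t)
  have hxfix : ∀ t, kron (S t) xstar = xstar := by
    intro t
    funext i
    have hrow : ∑ j, S t i j = 1 := (hS t).2 i
    calc kron (S t) xstar i = ∑ j, S t i j • xstar j := rfl
      _ = ∑ j, S t i j • xstar i := by
          exact Finset.sum_congr rfl fun j _ => by rw [hcons j i]
      _ = (∑ j, S t i j) • xstar i := by rw [Finset.sum_smul]
      _ = xstar i := by rw [hrow, one_smul]
  set a : ℕ → ℝ := fun t => N (x t - xstar) with ha
  set b : ℕ → ℝ := fun t => N (kron (S t) (x t) - xstar) with hb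
  have h1 : ∀ t, 1 ≤ t → a (t + 1) ≤ b t := by
    intro t ht
    have := hM (kron (S t) (x t)) xstar hfix
    simpa [ha, hb, hx t ht] using this
  have h2 : ∀ t, b t ≤ a t := fun t => hSq t (x t) xstar (hxfix t)
  have hanti : ∀ s t : ℕ, 1 ≤ s → s ≤ t → a t ≤ a s := by
    intro s t hs hst
    induction t, hst using Nat.le_induction with
    | base => exact le_rfl
    | succ t hst ih => exact le_trans (le_trans (h1 t (le_trans hs hst)) (h2 t)) ih
  obtain ⟨C, hC0, hC⟩ := normOn_upper N hN
  obtain ⟨c, hc0, hc⟩ := normOn_lower N hN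
  -- b along the subsequence tends to 0
  have hbphi : Tendsto (fun k => b (φ k)) atTop (𝓝 0) := by
    have h0 : Tendsto (fun k => kron (S (φ k)) (x (φ k)) - xstar) atTop (𝓝 0) := by
      simpa using hconv.sub_const xstar
    have hnorm : Tendsto (fun k => ‖kron (S (φ k)) (x (φ k)) - xstar‖) atTop (𝓝 0) := by
      simpa using h0.norm
    refine squeeze_zero (fun k => normOn_nonneg N hN _) (fun k => hC _) ?_
    simpa using hnorm.const_mul C
  -- a tends to 0
  have ha0 : Tendsto a atTop (𝓝 0) := by
    rw [Metric.tendsto_atTop]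
    intro ε hε
    rw [Metric.tendsto_atTop] at hbphi
    obtain ⟨K, hK⟩ := hbphi ε hε
    set k := max K 1 with hk
    have hbk : b (φ k) < ε := by
      have h := hK k (le_max_left _ _)
      have hnn : 0 ≤ b (φ k) := normOn_nonneg N hN _
      rwa [Real.dist_eq, sub_zero, abs_of_nonneg hnn] at h
    refine ⟨φ k + 1, fun t ht => ?_⟩
    have hφk1 : 1 ≤ φ k := le_trans (le_max_right K 1) hφ.le_apply
    have hat : a t ≤ a (φ k + 1) := hanti (φ k + 1) t (by omega) ht
    have hlt : a t < ε := lt_of_le_of_lt (le_trans hat (h1 (φ k) hφk1)) hbk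
    have hnn : 0 ≤ a t := normOn_nonneg N hN _
    rw [Real.dist_eq, sub_zero, abs_of_nonneg hnn]
    exact hlt
  -- conclude
  rw [← tendsto_sub_nhds_zero_iff, tendsto_zero_iff_norm_tendsto_zero]
  refine squeeze_zero (f := fun t => ‖x t - xstar‖) (g := fun t => c⁻¹ * a t)
    (fun t => norm_nonneg _) (fun t => ?_) (by simpa using ha0.const_mul c⁻¹)
  calc ‖x t - xstar‖ = c⁻¹ * (c * ‖x t - xstar‖) := by field_simp
    _ ≤ c⁻¹ * a t := mul_le_mul_of_nonneg_left (hc _) (by positivity)
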